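/- Let μ be a real number with μ ≠ 0 and μ ≠ 1, and let a, b : ℝ → ℝ be continuous. Define A(t) = exp((μ−1)·∫₀ᵗ a(τ) dτ) and B(t) = −(∫₀ᵗ b(τ)·exp(−∫₀^τ a(y) dy) dτ)·exp(μ·∫₀ᵗ a(τ) dτ), and the radical Lagrangian L(x, v, t) = (A(t)·v + B(t))^{1/μ} (with the real power defined for a positive base). Then a twice differentiable curve x : ℝ → ℝ with A(t)·x'(t) + B(t) > 0 for all t satisfies the Euler–Lagrange equation of L if and only if x''(t) = a(t)·x'(t) + b(t) for all t ∈ ℝ. -/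

import Mathlib

/-- Partial derivative of the Lagrangian `L x v t` in the velocity argument. -/
noncomputable def pv (L : ℝ → ℝ → ℝ → ℝ) (x v t : ℝ) : ℝ := deriv (fun w => L x w t) v

/-- Partial derivative of the Lagrangian `L x v t` in the position argument. -/
noncomputable def px (L : ℝ → ℝ → ℝ → ℝ) (x v t : ℝ) : ℝ := deriv (fun y => L y v t) x

/-- A curve `x` satisfies the Euler–Lagrange equation of `L`:
`(d/dt)[(∂L/∂v)(x t, x' t, t)] = (∂L/∂x)(x t, x' t, t)` for all `t`. -/
def SatisfiesEL (L : ℝ → ℝ → ℝ → ℝ) (x : ℝ → ℝ) : Prop :=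
  ∀ t : ℝ, deriv (fun s => pv L (x s) (deriv x s) s) t = px L (x t) (deriv x t) t

/-- Partial derivative of `f (x, t)` in the first argument. -/
noncomputable def pd1 (f : ℝ × ℝ → ℝ) (x t : ℝ) : ℝ := deriv (fun y => f (y, t)) x

/-- Partial derivative of `f (x, t)` in the second argument. -/
noncomputable def pd2 (f : ℝ × ℝ → ℝ) (x t : ℝ) : ℝ := deriv (fun s => f (x, s)) t

noncomputable def Ii (a : ℝ → ℝ) (t : ℝ) : ℝ := ∫ τ in (0:ℝ)..t, a τ

noncomputable def Jj (a b : ℝ → ℝ) (t : ℝ) : ℝ := ∫ τ in (0:ℝ)..t, b τ * Real.exp (-Ii a τ)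

lemma ftc (f : ℝ → ℝ) (hf : Continuous f) (t : ℝ) :
    HasDerivAt (fun u => ∫ τ in (0:ℝ)..u, f τ) (f t) t :=
  intervalIntegral.integral_hasDerivAt_right (hf.intervalIntegrable _ _)
    (hf.stronglyMeasurableAtFilter _ _) hf.continuousAt

theorem radical_lagrangian_linear_velocity
    (μ : ℝ) (hμ0 : μ ≠ 0) (hμ1 : μ ≠ 1)
    (a b : ℝ → ℝ) (ha : Continuous a) (hb : Continuous b)
    (A B : ℝ → ℝ)
    (hA : ∀ t : ℝ, A t = Real.exp ((μ - 1) * ∫ τ in (0:ℝ)..t, a τ))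
    (hB : ∀ t : ℝ, B t =
      -(∫ τ in (0:ℝ)..t, b τ * Real.exp (-∫ y in (0:ℝ)..τ, a y)) *
        Real.exp (μ * ∫ τ in (0:ℝ)..t, a τ))
    (L : ℝ → ℝ → ℝ → ℝ)
    (hL : ∀ x t : ℝ, ∀ v : ℝ, 0 < A t * v + B t → L x v t = (A t * v + B t) ^ (1 / μ))
    (x : ℝ → ℝ) (hx : Differentiable ℝ x) (hx' : Differentiable ℝ (deriv x))
    (hpos : ∀ t : ℝ, 0 < A t * deriv x t + B t) :
    SatisfiesEL L x ↔
      ∀ t : ℝ, deriv (deriv x) t = a t * deriv x t + b t := by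
  have hμ1' : (1:ℝ) - μ ≠ 0 := sub_ne_zero.mpr (Ne.symm hμ1)
  have hAeq : ∀ t, A t = Real.exp ((μ - 1) * Ii a t) := hA
  have hBeq : ∀ t, B t = -(Jj a b t) * Real.exp (μ * Ii a t) := hB
  have hApos : ∀ t, 0 < A t := fun t => (hAeq t) ▸ Real.exp_pos _
  have hI : ∀ t, HasDerivAt (Ii a) (a t) t := ftc a ha
  have hIc : Continuous (Ii a) :=
    (Differentiable.continuous (fun t => (hI t).differentiableAt))
  have hbc : Continuous (fun τ => b τ * Real.exp (-Ii a τ)) := hb.mul (hIc.neg.rexp)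
  have hJ : ∀ t, HasDerivAt (Jj a b) (b t * Real.exp (-Ii a t)) t := ftc _ hbc
  have hA' : ∀ t, HasDerivAt A ((μ - 1) * a t * A t) t := by
    intro t
    have h := (((hI t).const_mul (μ - 1)).exp).congr_of_eventuallyEq
      (Filter.Eventually.of_forall (fun s => hAeq s))
    have heq : (μ - 1) * a t * A t = Real.exp ((μ - 1) * Ii a t) * ((μ - 1) * a t) := by
      rw [hAeq t]; ring
    rw [heq]; exact h
  have hB' : ∀ t, HasDerivAt B (-(b t) * A t + μ * a t * B t) t := by
    intro t
    have h := (((hJ t).neg).mul (((hI t).const_mul μ).exp)).congr_of_eventuallyEq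
      (Filter.Eventually.of_forall (fun s => hBeq s))
    have he : Real.exp (-Ii a t) * Real.exp (μ * Ii a t) = A t := by
      rw [hAeq t, ← Real.exp_add]; ring_nf
    have heq : -(b t) * A t + μ * a t * B t =
        -(b t * Real.exp (-Ii a t)) * Real.exp (μ * Ii a t) +
          -(Jj a b t) * (Real.exp (μ * Ii a t) * (μ * a t)) := by
      rw [← he, hBeq t]; ring
    rw [heq]; exact h
  have hpv : ∀ s, pv L (x s) (deriv x s) s
      = A s * ((1/μ) * (A s * deriv x s + B s) ^ (1/μ - 1)) := by
    intro s
    have hd : HasDerivAt (fun w => A s * w + B s) (A s) (deriv x s) := by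
      simpa using ((hasDerivAt_id (deriv x s)).const_mul (A s)).add_const (B s)
    have hrp := hd.rpow_const (p := 1/μ) (Or.inl (ne_of_gt (hpos s)))
    have hc : ContinuousAt (fun w => A s * w + B s) (deriv x s) :=
      ((continuous_const.mul continuous_id).add continuous_const).continuousAt
    have hev : (fun w => L (x s) w s) =ᶠ[nhds (deriv x s)]
        (fun w => (A s * w + B s) ^ (1/μ)) := by
      filter_upwards [hc.eventually (eventually_gt_nhds (hpos s))] with w hw
      exact hL (x s) s w hw
    rw [pv, hev.deriv_eq, hrp.deriv]
    ring
  have hpx : ∀ t, px L (x t) (deriv x t) t = 0 := by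
    intro t
    have hcst : (fun y => L y (deriv x t) t)
        = fun _ => (A t * deriv x t + B t) ^ (1/μ) :=
      funext fun y => hL y t (deriv x t) (hpos t)
    rw [px, hcst, deriv_const]
  have hF : ∀ t, HasDerivAt (fun s => A s * ((1/μ) * (A s * deriv x s + B s) ^ (1/μ - 1)))
      (((1 - μ)/μ^2) * (A t)^2 * (A t * deriv x t + B t) ^ (1/μ - 2) *
        (deriv (deriv x) t - (a t * deriv x t + b t))) t := by
    intro t
    have hg := ((hA' t).mul ((hx' t).hasDerivAt)).add (hB' t)
    have hgr := hg.rpow_const (p := 1/μ - 1) (Or.inl (ne_of_gt (hpos t)))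
    have h := (hA' t).mul (hgr.const_mul (1/μ))
    have e2 : (1/μ - 1 - 1 : ℝ) = 1/μ - 2 := by ring
    rw [e2] at h
    have e1 : (A t * deriv x t + B t) ^ (1/μ - 1)
        = (A t * deriv x t + B t) ^ (1/μ - 2) * (A t * deriv x t + B t) := by
      rw [show (1/μ - 1 : ℝ) = (1/μ - 2) + 1 by ring,
        Real.rpow_add_one (ne_of_gt (hpos t))]
    simp only [Pi.mul_apply, Pi.add_apply] at h
    rw [e1] at h
    refine h.congr_deriv ?_
    field_simp
    ring
  have key : ∀ t, (deriv (fun s => pv L (x s) (deriv x s) s) t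
      = px L (x t) (deriv x t) t) ↔ deriv (deriv x) t = a t * deriv x t + b t := by
    intro t
    rw [hpx t, funext hpv, (hF t).deriv]
    have hC : ((1 - μ)/μ^2) * (A t)^2 * (A t * deriv x t + B t) ^ (1/μ - 2) ≠ 0 :=
      mul_ne_zero (mul_ne_zero (div_ne_zero hμ1' (pow_ne_zero _ hμ0))
        (pow_ne_zero _ (hApos t).ne')) (Real.rpow_pos_of_pos (hpos t) _).ne'
    rw [mul_eq_zero, or_iff_right hC, sub_eq_zero]
  simp only [SatisfiesEL]
  exact forall_congr' key
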